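/- Let K be a field, n ≥ 1, and let A ∈ K^{n×n} have characteristic polynomial χ_A(z) = z^n − Σ_{i=0}^{n-1} p_i z^i, where p = (p_0, …, p_{n-1}) ∈ K^n. Then the following are equivalent: (i) the crossover identity Σ_{k=0}^{n-1} g_k A^k (b + b_n p) + g_n A^n (b + b_n p) = Σ_{k=0}^{n-1} b_k A^k (g + g_n p) + b_n A^n (g + g_n p) holds for all b, g ∈ K^n and all scalars b_n, g_n ∈ K; (ii) A = F_p. -/

import Mathlib

open Matrix

/-- The second companion matrix `F_p` of `p ∈ K^{n+1}`: columns `0,…,n-1` are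
`e_1,…,e_n` and the last column is `p`. -/
def companion {K : Type*} [Field K] {n : ℕ} (p : Fin (n + 1) → K) :
    Matrix (Fin (n + 1)) (Fin (n + 1)) K :=
  Matrix.of fun i j => if j = Fin.last n then p i else if (i : ℕ) = (j : ℕ) + 1 then 1 else 0

/-- The reachability (Krylov) matrix `R(A, g) = [g, Ag, …, A^{n-1} g]`. -/
def krylov {K : Type*} [Field K] {n : ℕ} (A : Matrix (Fin n) (Fin n) K) (g : Fin n → K) :
    Matrix (Fin n) (Fin n) K :=
  Matrix.of fun i j => (A ^ (j : ℕ)).mulVec g i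

/-- `b(A) = Σ_{i=0}^{n-1} b_i A^i`. -/
def polyEval {K : Type*} [Field K] {n : ℕ} (b : Fin n → K) (A : Matrix (Fin n) (Fin n) K) :
    Matrix (Fin n) (Fin n) K :=
  ∑ i : Fin n, b i • A ^ (i : ℕ)

namespace CrossAux

variable {K : Type*} [Field K] {n : ℕ}

/-- sum of matrix-smul applied to vector -/
lemma sum_smul_mulVec (c : Fin (n+1) → K) (M : Fin (n+1) → Matrix (Fin (n+1)) (Fin (n+1)) K)
    (v : Fin (n+1) → K) :
    (∑ i : Fin (n+1), c i • M i) *ᵥ v = ∑ i : Fin (n+1), c i • (M i *ᵥ v) := by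
  ext r
  simp only [mulVec, dotProduct, Finset.sum_apply, Matrix.sum_apply, Pi.smul_apply,
    Matrix.smul_apply, smul_eq_mul, Finset.sum_mul, Finset.mul_sum]
  rw [Finset.sum_comm]
  exact Finset.sum_congr rfl fun i _ => Finset.sum_congr rfl fun j _ => (mul_assoc _ _ _)

lemma smul_single_sum (x : Fin (n+1) → K) :
    ∑ j : Fin (n+1), x j • (Pi.single j 1 : Fin (n+1) → K) = x := by
  rw [← Finset.univ_sum_single x]
  refine Finset.sum_congr rfl fun j _ => ?_
  ext i
  simp [Pi.single_apply]

lemma sum_single_smul_apply (i : Fin (n+1)) (v : Fin (n+1) → Fin (n+1) → K) :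
    ∑ k : Fin (n+1), (Pi.single i (1:K) : Fin (n+1) → K) k • v k = v i := by
  rw [Fintype.sum_eq_single i]
  · simp
  · intro k hk; simp [Pi.single_eq_of_ne hk]


lemma companion_mulVec_castSucc (p : Fin (n+1) → K) (i : Fin n) :
    (companion p) *ᵥ (Pi.single i.castSucc 1 : Fin (n+1) → K) = Pi.single i.succ 1 := by
  ext r
  rw [Matrix.mulVec_single]
  have h1 : i.castSucc ≠ Fin.last n := (Fin.castSucc_lt_last i).ne
  simp [companion, h1, Pi.single_apply, Fin.ext_iff]
  intro h; exact absurd h i.isLt.ne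

lemma companion_mulVec_last (p : Fin (n+1) → K) :
    (companion p) *ᵥ (Pi.single (Fin.last n) 1 : Fin (n+1) → K) = p := by
  ext r
  rw [Matrix.mulVec_single]
  simp [companion]

lemma cayley (A : Matrix (Fin (n+1)) (Fin (n+1)) K) (p : Fin (n+1) → K)
    (hchar : A.charpoly =
      Polynomial.X ^ (n + 1) - ∑ i : Fin (n + 1), Polynomial.C (p i) * Polynomial.X ^ (i : ℕ)) :
    A ^ (n+1) = ∑ i : Fin (n+1), p i • A ^ (i : ℕ) := by
  have h := Matrix.aeval_self_charpoly A
  rw [hchar] at h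
  simp only [map_sub, map_sum, _root_.map_mul, map_pow, Polynomial.aeval_X, Polynomial.aeval_C,
    sub_eq_zero] at h
  rw [h]
  refine Finset.sum_congr rfl fun i _ => ?_
  rw [Algebra.smul_def]


lemma companion_pow_single (p : Fin (n+1) → K) (j : Fin (n+1)) :
    ((companion p) ^ (j : ℕ)) *ᵥ (Pi.single (0 : Fin (n+1)) 1 : Fin (n+1) → K)
      = Pi.single j 1 := by
  induction j using Fin.induction with
  | zero => rw [Fin.val_zero, pow_zero, Matrix.one_mulVec]
  | succ i ih =>
    rw [Fin.val_succ, pow_succ', ← Matrix.mulVec_mulVec]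
    rw [show ((i : ℕ) : ℕ) = ((i.castSucc : Fin (n+1)) : ℕ) from rfl] at *
    rw [ih, companion_mulVec_castSucc]

lemma companion_pow_comm (p : Fin (n+1) → K) (i j : Fin (n+1)) :
    ((companion p) ^ (i : ℕ)) *ᵥ (Pi.single j 1 : Fin (n+1) → K)
      = ((companion p) ^ (j : ℕ)) *ᵥ (Pi.single i 1 : Fin (n+1) → K) := by
  have h : ∀ i j : Fin (n+1), ((companion p) ^ (i : ℕ)) *ᵥ (Pi.single j 1 : Fin (n+1) → K)
      = ((companion p) ^ ((i : ℕ) + (j : ℕ))) *ᵥ (Pi.single (0 : Fin (n+1)) 1 : Fin (n+1) → K) := by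
    intro i j
    rw [← companion_pow_single p j, Matrix.mulVec_mulVec, ← pow_add]
  rw [h i j, h j i]
  exact congrArg (fun m => (companion p) ^ m *ᵥ (Pi.single (0 : Fin (n+1)) 1 : Fin (n+1) → K))
    (Nat.add_comm _ _)

lemma expand (A : Matrix (Fin (n+1)) (Fin (n+1)) K) (x y : Fin (n+1) → K) :
    ∑ k : Fin (n+1), x k • (A ^ (k : ℕ)) *ᵥ y
      = ∑ k : Fin (n+1), ∑ j : Fin (n+1),
          (x k * y j) • ((A ^ (k : ℕ)) *ᵥ (Pi.single j 1 : Fin (n+1) → K)) := by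
  refine Finset.sum_congr rfl fun k _ => ?_
  conv_lhs => rw [← smul_single_sum y]
  rw [← Matrix.mulVecLin_apply, map_sum, Finset.smul_sum]
  simp only [_root_.map_smul, Matrix.mulVecLin_apply, smul_smul]

lemma companion_sym (p : Fin (n+1) → K) (x y : Fin (n+1) → K) :
    ∑ k : Fin (n+1), x k • ((companion p) ^ (k : ℕ)) *ᵥ y
      = ∑ k : Fin (n+1), y k • ((companion p) ^ (k : ℕ)) *ᵥ x := by
  rw [expand, expand, Finset.sum_comm]
  refine Finset.sum_congr rfl fun k _ => Finset.sum_congr rfl fun j _ => ?_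
  rw [mul_comm, companion_pow_comm]

end CrossAux

open CrossAux

/-- Theorem 4: let `A` have characteristic polynomial `z^n - Σ_{i<n} p_i z^i`.
Then the crossover identity
`Σ_{k=0}^n A^k g_k (b + b_n p) = Σ_{k=0}^n A^k b_k (g + g_n p)`
holds for all `b, g, b_n, g_n` if and only if `A = F_p`. -/
theorem crossover_iff_companion {K : Type*} [Field K] {n : ℕ}
    (A : Matrix (Fin (n + 1)) (Fin (n + 1)) K) (p : Fin (n + 1) → K)
    (hchar : A.charpoly =
      Polynomial.X ^ (n + 1) - ∑ i : Fin (n + 1), Polynomial.C (p i) * Polynomial.X ^ (i : ℕ)) :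
    ((∀ b g : Fin (n + 1) → K, ∀ bn gn : K,
        (∑ k : Fin (n + 1), g k • (A ^ (k : ℕ)).mulVec (b + bn • p)) +
            gn • (A ^ (n + 1)).mulVec (b + bn • p) =
          (∑ k : Fin (n + 1), b k • (A ^ (k : ℕ)).mulVec (g + gn • p)) +
            bn • (A ^ (n + 1)).mulVec (g + gn • p)) ↔
      A = companion p) := by
  have hCH := cayley A p hchar
  have combine : ∀ (u : Fin (n+1) → K) (c : K) (v : Fin (n+1) → K),
      (∑ k : Fin (n+1), u k • (A ^ (k : ℕ)) *ᵥ v) + c • (A ^ (n+1)) *ᵥ v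
        = ∑ k : Fin (n+1), (u + c • p) k • (A ^ (k : ℕ)) *ᵥ v := by
    intro u c v
    rw [hCH, sum_smul_mulVec, Finset.smul_sum, ← Finset.sum_add_distrib]
    refine Finset.sum_congr rfl fun k _ => ?_
    simp [add_smul, smul_smul]
  constructor
  · intro H
    have H0 : ∀ b g : Fin (n+1) → K,
        ∑ k : Fin (n+1), g k • (A ^ (k : ℕ)) *ᵥ b
          = ∑ k : Fin (n+1), b k • (A ^ (k : ℕ)) *ᵥ g := by
      intro b g
      simpa using H b g 0 0
    have S : ∀ i j : Fin (n+1), (A ^ (i : ℕ)) *ᵥ (Pi.single j 1 : Fin (n+1) → K)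
        = (A ^ (j : ℕ)) *ᵥ (Pi.single i 1 : Fin (n+1) → K) := by
      intro i j
      have h := H0 (Pi.single j 1) (Pi.single i 1)
      rwa [sum_single_smul_apply, sum_single_smul_apply] at h
    have ecolA : ∀ i : Fin (n+1), (A ^ (i : ℕ)) *ᵥ (Pi.single (0 : Fin (n+1)) 1 : Fin (n+1) → K)
        = Pi.single i 1 := by
      intro i
      rw [S i 0, Fin.val_zero, pow_zero, Matrix.one_mulVec]
    have hcol : ∀ j : Fin (n+1), A *ᵥ (Pi.single j 1 : Fin (n+1) → K)
        = (companion p) *ᵥ (Pi.single j 1 : Fin (n+1) → K) := by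
      intro j
      rcases eq_or_ne j (Fin.last n) with rfl | hj
      · rw [companion_mulVec_last, ← ecolA (Fin.last n), Matrix.mulVec_mulVec]
        rw [show A * A ^ ((Fin.last n : Fin (n+1)) : ℕ) = A ^ (n+1) by
          rw [Fin.val_last, pow_succ']]
        rw [hCH, sum_smul_mulVec]
        simp only [ecolA]
        exact smul_single_sum p
      · obtain ⟨j', rfl⟩ := Fin.exists_castSucc_eq.mpr hj
        rw [companion_mulVec_castSucc, ← ecolA j'.castSucc, Matrix.mulVec_mulVec]
        rw [show A * A ^ ((j'.castSucc : Fin (n+1)) : ℕ) = A ^ ((j'.succ : Fin (n+1)) : ℕ) by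
          rw [Fin.coe_castSucc, Fin.val_succ, pow_succ']]
        exact ecolA j'.succ
    ext i j
    have h := congrFun (hcol j) i
    simpa using h
  · intro hA b g bn gn
    rw [combine g gn, combine b bn, hA]
    exact companion_sym p _ _
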